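/- Let p be any positive integer. Then there exists a strictly isomorphic rectangle partition pair for (p, p+1) of size at most 4·√p + 1. -/

import Mathlib

open scoped Classical

/-- An axis-parallel rectangle in the plane, given by its coordinates. -/
structure Rect where
  x1 : ℝ
  x2 : ℝ
  y1 : ℝ
  y2 : ℝ

namespace Rect

/-- The horizontal side length. -/
def width (r : Rect) : ℝ := r.x2 - r.x1

/-- The vertical side length. -/
def height (r : Rect) : ℝ := r.y2 - r.y1

/-- The closed rectangle as a set of points. -/
def carrier (r : Rect) : Set (ℝ × ℝ) := Set.Icc r.x1 r.x2 ×ˢ Set.Icc r.y1 r.y2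

/-- The interior of the rectangle. -/
def inner (r : Rect) : Set (ℝ × ℝ) := Set.Ioo r.x1 r.x2 ×ˢ Set.Ioo r.y1 r.y2

/-- The rectangle is nondegenerate. -/
def Nondeg (r : Rect) : Prop := r.x1 < r.x2 ∧ r.y1 < r.y2

end Rect

/-- `P` is a rectangle partition of `[0, W] × [0, H]`: finitely many nondegenerate
rectangles with pairwise disjoint interiors whose union is `[0, W] × [0, H]`. -/
def IsRectPartition {k : ℕ} (W H : ℝ) (P : Fin k → Rect) : Prop :=
  (∀ i, (P i).Nondeg) ∧
  (∀ i j : Fin k, i ≠ j → (P i).inner ∩ (P j).inner = ∅) ∧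
  (⋃ i, (P i).carrier) = Set.Icc (0 : ℝ) W ×ˢ Set.Icc (0 : ℝ) H

/-- `P1`, `P2`, `σ` form a strictly isomorphic rectangle partition pair between the
rectangles `a × b` and `c × d`: matched modules have equal width and equal height. -/
def IsStrictIsoPair (a b c d : ℝ) {k : ℕ} (P1 P2 : Fin k → Rect)
    (σ : Equiv.Perm (Fin k)) : Prop :=
  IsRectPartition a b P1 ∧ IsRectPartition c d P2 ∧
  ∀ i, (P1 i).width = (P2 (σ i)).width ∧ (P1 i).height = (P2 (σ i)).height

/-- There is a strictly isomorphic rectangle partition pair between `a × b` and `c × d`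
of size `k`. -/
def StrictPairGen (a b c d : ℝ) (k : ℕ) : Prop :=
  ∃ (P1 P2 : Fin k → Rect) (σ : Equiv.Perm (Fin k)), IsStrictIsoPair a b c d P1 P2 σ

/-- A strictly isomorphic rectangle partition pair for `(p, q)` of size `k`:
partitions of `[0,p] × [0,q]` and `[0,q] × [0,p]` with a matching preserving
widths and heights. -/
def StrictPair (p q : ℝ) (k : ℕ) : Prop := StrictPairGen p q q p k

/-- An isomorphic rectangle partition pair (rotation allowed) between `a × b` and
`c × d` of size `k`: matched modules have the same unordered pair of side lengths. -/
def IsoPairRot (a b c d : ℝ) (k : ℕ) : Prop :=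
  ∃ (P1 P2 : Fin k → Rect) (σ : Equiv.Perm (Fin k)),
    IsRectPartition a b P1 ∧ IsRectPartition c d P2 ∧
    ∀ i, ((P1 i).width = (P2 (σ i)).width ∧ (P1 i).height = (P2 (σ i)).height) ∨
         ((P1 i).width = (P2 (σ i)).height ∧ (P1 i).height = (P2 (σ i)).width)

/-- A slat rectangle partition: if horizontal sides of two modules lie on the same
horizontal line and overlap in more than one point, they are identical segments. -/
def IsSlat {k : ℕ} (P : Fin k → Rect) : Prop :=
  ∀ i j : Fin k, ∀ yi ∈ ({(P i).y1, (P i).y2} : Set ℝ),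
    ∀ yj ∈ ({(P j).y1, (P j).y2} : Set ℝ), yi = yj →
      max (P i).x1 (P j).x1 < min (P i).x2 (P j).x2 →
      (P i).x1 = (P j).x1 ∧ (P i).x2 = (P j).x2


namespace ST
open Set

lemma mem_carrier {r : Rect} {z : ℝ × ℝ} :
    z ∈ r.carrier ↔ (r.x1 ≤ z.1 ∧ z.1 ≤ r.x2) ∧ (r.y1 ≤ z.2 ∧ z.2 ≤ r.y2) := by
  constructor
  · rintro ⟨h1, h2⟩
    simp [Rect.carrier, Set.mem_prod, Set.mem_Icc] at *
    tauto
  · intro h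
    simp [Rect.carrier, Set.mem_prod, Set.mem_Icc, Prod.le_def]
    tauto

lemma mem_inner {r : Rect} {z : ℝ × ℝ} :
    z ∈ r.inner ↔ (r.x1 < z.1 ∧ z.1 < r.x2) ∧ (r.y1 < z.2 ∧ z.2 < r.y2) := by
  simp [Rect.inner, Set.mem_prod, Set.mem_Ioo]

lemma inner_sub_carrier (r : Rect) : r.inner ⊆ r.carrier := by
  intro z hz
  rw [mem_inner] at hz
  rw [mem_carrier]
  exact ⟨⟨hz.1.1.le, hz.1.2.le⟩, hz.2.1.le, hz.2.2.le⟩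

def disj (r s : Rect) : Prop := r.inner ∩ s.inner = ∅

lemma disj_symm {r s : Rect} (h : disj r s) : disj s r := by
  rw [disj, Set.inter_comm]; exact h

lemma lt_of_inner_sub_xle {r : Rect} {m : ℝ} (h : r.inner ⊆ {z : ℝ × ℝ | z.1 ≤ m})
    {z : ℝ × ℝ} (hz : z ∈ r.inner) : z.1 < m := by
  rw [mem_inner] at hz
  have hw : ((z.1 + r.x2)/2, z.2) ∈ r.inner := by
    rw [mem_inner]
    exact ⟨⟨by linarith [hz.1.1, hz.1.2], by linarith [hz.1.2]⟩, hz.2⟩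
  have := h hw
  simp only [Set.mem_setOf_eq] at this
  linarith [hz.1.2]

lemma lt_of_inner_sub_xge {r : Rect} {m : ℝ} (h : r.inner ⊆ {z : ℝ × ℝ | m ≤ z.1})
    {z : ℝ × ℝ} (hz : z ∈ r.inner) : m < z.1 := by
  rw [mem_inner] at hz
  have hw : ((r.x1 + z.1)/2, z.2) ∈ r.inner := by
    rw [mem_inner]
    exact ⟨⟨by linarith [hz.1.1], by linarith [hz.1.1, hz.1.2]⟩, hz.2⟩
  have := h hw
  simp only [Set.mem_setOf_eq] at this
  linarith [hz.1.1]

lemma lt_of_inner_sub_yle {r : Rect} {m : ℝ} (h : r.inner ⊆ {z : ℝ × ℝ | z.2 ≤ m})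
    {z : ℝ × ℝ} (hz : z ∈ r.inner) : z.2 < m := by
  rw [mem_inner] at hz
  have hw : (z.1, (z.2 + r.y2)/2) ∈ r.inner := by
    rw [mem_inner]
    exact ⟨hz.1, ⟨by linarith [hz.2.1, hz.2.2], by linarith [hz.2.2]⟩⟩
  have := h hw
  simp only [Set.mem_setOf_eq] at this
  linarith [hz.2.2]

lemma lt_of_inner_sub_yge {r : Rect} {m : ℝ} (h : r.inner ⊆ {z : ℝ × ℝ | m ≤ z.2})
    {z : ℝ × ℝ} (hz : z ∈ r.inner) : m < z.2 := by
  rw [mem_inner] at hz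
  have hw : (z.1, (r.y1 + z.2)/2) ∈ r.inner := by
    rw [mem_inner]
    exact ⟨hz.1, ⟨by linarith [hz.2.1], by linarith [hz.2.1, hz.2.2]⟩⟩
  have := h hw
  simp only [Set.mem_setOf_eq] at this
  linarith [hz.2.1]

lemma disj_of_sepx {r s : Rect} {m : ℝ} (h1 : r.inner ⊆ {z : ℝ × ℝ | z.1 ≤ m})
    (h2 : s.inner ⊆ {z : ℝ × ℝ | m ≤ z.1}) : disj r s := by
  rw [disj, Set.eq_empty_iff_forall_notMem]
  rintro z ⟨hr, hs⟩
  have := lt_of_inner_sub_xle h1 hr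
  have := lt_of_inner_sub_xge h2 hs
  linarith

lemma disj_of_sepy {r s : Rect} {m : ℝ} (h1 : r.inner ⊆ {z : ℝ × ℝ | z.2 ≤ m})
    (h2 : s.inner ⊆ {z : ℝ × ℝ | m ≤ z.2}) : disj r s := by
  rw [disj, Set.eq_empty_iff_forall_notMem]
  rintro z ⟨hr, hs⟩
  have := lt_of_inner_sub_yle h1 hr
  have := lt_of_inner_sub_yge h2 hs
  linarith

lemma carrier_sub_xle {r : Rect} {m : ℝ} (h : r.x2 ≤ m) :
    r.carrier ⊆ {z : ℝ × ℝ | z.1 ≤ m} := by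
  intro z hz; rw [mem_carrier] at hz; exact le_trans hz.1.2 h

lemma carrier_sub_xge {r : Rect} {m : ℝ} (h : m ≤ r.x1) :
    r.carrier ⊆ {z : ℝ × ℝ | m ≤ z.1} := by
  intro z hz; rw [mem_carrier] at hz; exact le_trans h hz.1.1

lemma carrier_sub_yle {r : Rect} {m : ℝ} (h : r.y2 ≤ m) :
    r.carrier ⊆ {z : ℝ × ℝ | z.2 ≤ m} := by
  intro z hz; rw [mem_carrier] at hz; exact le_trans hz.2.2 h

lemma carrier_sub_yge {r : Rect} {m : ℝ} (h : m ≤ r.y1) :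
    r.carrier ⊆ {z : ℝ × ℝ | m ≤ z.2} := by
  intro z hz; rw [mem_carrier] at hz; exact le_trans h hz.2.1

/-- `l` tiles the region `A`. -/
def TL (A : Set (ℝ × ℝ)) (l : List Rect) : Prop :=
  (∀ r ∈ l, r.Nondeg) ∧ l.Pairwise disj ∧ (⋃ r ∈ l, r.carrier) = A

lemma TL.single {r : Rect} (h : r.Nondeg) : TL r.carrier [r] := by
  refine ⟨?_, ?_, ?_⟩
  · intro s hs; rw [List.mem_singleton] at hs; subst hs; exact h
  · simp
  · simp

lemma TL.inner_sub {A : Set (ℝ × ℝ)} {l : List Rect} (h : TL A l) {r : Rect} (hr : r ∈ l) :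
    r.inner ⊆ A := by
  intro z hz
  rw [← h.2.2]
  exact Set.mem_biUnion hr (inner_sub_carrier r hz)

lemma TL.union {A B : Set (ℝ × ℝ)} {l m : List Rect} (hA : TL A l) (hB : TL B m)
    (hd : ∀ r ∈ l, ∀ s ∈ m, disj r s) : TL (A ∪ B) (l ++ m) := by
  refine ⟨?_, ?_, ?_⟩
  · intro r hr
    rcases List.mem_append.1 hr with h | h
    exacts [hA.1 r h, hB.1 r h]
  · exact List.pairwise_append.2 ⟨hA.2.1, hB.2.1, hd⟩
  · rw [← hA.2.2, ← hB.2.2]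
    apply Set.ext; intro z
    simp only [Set.mem_iUnion, Set.mem_union, List.mem_append, exists_prop]
    constructor
    · rintro ⟨r, h | h, hz⟩
      exacts [Or.inl ⟨r, h, hz⟩, Or.inr ⟨r, h, hz⟩]
    · rintro (⟨r, h, hz⟩ | ⟨r, h, hz⟩)
      exacts [⟨r, Or.inl h, hz⟩, ⟨r, Or.inr h, hz⟩]

end ST

namespace ST
open Set

/-- Affine image of a rectangle: scale by `c`, translate by `(u, v)`. -/
noncomputable def aff (c u v : ℝ) (r : Rect) : Rect :=
  ⟨c * r.x1 + u, c * r.x2 + u, c * r.y1 + v, c * r.y2 + v⟩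

lemma aff_width (c u v : ℝ) (r : Rect) : (aff c u v r).width = c * r.width := by
  simp [aff, Rect.width]; ring

lemma aff_height (c u v : ℝ) (r : Rect) : (aff c u v r).height = c * r.height := by
  simp [aff, Rect.height]; ring

lemma aff_nondeg {c : ℝ} (hc : 0 < c) {u v : ℝ} {r : Rect} (h : r.Nondeg) :
    (aff c u v r).Nondeg := by
  exact ⟨by have := h.1; simp only [aff]; nlinarith, by have := h.2; simp only [aff]; nlinarith⟩

/-- The inverse point transformation. -/
noncomputable def tmap (c u v : ℝ) (z : ℝ × ℝ) : ℝ × ℝ := ((z.1 - u) / c, (z.2 - v) / c)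

lemma aux_le {c : ℝ} (hc : 0 < c) {a b u : ℝ} : c * a + u ≤ b ↔ a ≤ (b - u) / c := by
  rw [le_div_iff₀ hc]; constructor <;> intro h <;> nlinarith

lemma aux_le' {c : ℝ} (hc : 0 < c) {a b u : ℝ} : b ≤ c * a + u ↔ (b - u) / c ≤ a := by
  rw [div_le_iff₀ hc]; constructor <;> intro h <;> nlinarith

lemma aux_lt {c : ℝ} (hc : 0 < c) {a b u : ℝ} : c * a + u < b ↔ a < (b - u) / c := by
  rw [lt_div_iff₀ hc]; constructor <;> intro h <;> nlinarith

lemma aux_lt' {c : ℝ} (hc : 0 < c) {a b u : ℝ} : b < c * a + u ↔ (b - u) / c < a := by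
  rw [div_lt_iff₀ hc]; constructor <;> intro h <;> nlinarith

lemma mem_aff_carrier {c : ℝ} (hc : 0 < c) {u v : ℝ} {r : Rect} {z : ℝ × ℝ} :
    z ∈ (aff c u v r).carrier ↔ tmap c u v z ∈ r.carrier := by
  rw [mem_carrier, mem_carrier]
  simp only [aff, tmap]
  rw [aux_le' hc, aux_le hc, aux_le' hc, aux_le hc]

lemma mem_aff_inner {c : ℝ} (hc : 0 < c) {u v : ℝ} {r : Rect} {z : ℝ × ℝ} :
    z ∈ (aff c u v r).inner ↔ tmap c u v z ∈ r.inner := by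
  rw [mem_inner, mem_inner]
  simp only [aff, tmap]
  rw [aux_lt' hc, aux_lt hc, aux_lt' hc, aux_lt hc]

lemma aff_inner {c : ℝ} (hc : 0 < c) (u v : ℝ) (r : Rect) :
    (aff c u v r).inner = tmap c u v ⁻¹' r.inner :=
  Set.ext fun _ => mem_aff_inner hc

lemma aff_carrier {c : ℝ} (hc : 0 < c) (u v : ℝ) (r : Rect) :
    (aff c u v r).carrier = tmap c u v ⁻¹' r.carrier :=
  Set.ext fun _ => mem_aff_carrier hc

lemma TL.aff {A : Set (ℝ × ℝ)} {l : List Rect} {c : ℝ} (hc : 0 < c) (u v : ℝ) (h : TL A l) :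
    TL (tmap c u v ⁻¹' A) (l.map (ST.aff c u v)) := by
  refine ⟨?_, ?_, ?_⟩
  · intro r hr
    rcases List.mem_map.1 hr with ⟨s, hs, rfl⟩
    exact aff_nondeg hc (h.1 s hs)
  · refine List.Pairwise.map _ ?_ h.2.1
    intro a b hab
    rw [disj, aff_inner hc, aff_inner hc, ← Set.preimage_inter, hab, Set.preimage_empty]
  · apply Set.ext; intro z
    simp only [Set.mem_iUnion, Set.mem_preimage, List.mem_map, exists_prop]
    rw [← h.2.2]
    simp only [Set.mem_iUnion, exists_prop]
    constructor
    · rintro ⟨r, ⟨s, hs, rfl⟩, hz⟩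
      exact ⟨s, hs, (mem_aff_carrier hc).1 hz⟩
    · rintro ⟨s, hs, hz⟩
      exact ⟨ST.aff c u v s, ⟨s, hs, rfl⟩, (mem_aff_carrier hc).2 hz⟩

/-- A matched pair of tilings: the first components tile `A`, the second components tile `B`,
and matched rectangles have equal widths and heights. -/
def TP (A B : Set (ℝ × ℝ)) (l : List (Rect × Rect)) : Prop :=
  TL A (l.map Prod.fst) ∧ TL B (l.map Prod.snd) ∧
  ∀ x ∈ l, x.1.width = x.2.width ∧ x.1.height = x.2.height

lemma TP.single {r s : Rect} (hr : r.Nondeg) (hs : s.Nondeg)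
    (hw : r.width = s.width) (hh : r.height = s.height) :
    TP r.carrier s.carrier [(r, s)] := by
  refine ⟨?_, ?_, ?_⟩
  · simpa using TL.single hr
  · simpa using TL.single hs
  · intro x hx; rw [List.mem_singleton] at hx; subst hx; exact ⟨hw, hh⟩

lemma TP.union {A A' B B' : Set (ℝ × ℝ)} {l l' : List (Rect × Rect)}
    (h : TP A B l) (h' : TP A' B' l')
    (hdA : ∀ r ∈ l.map Prod.fst, ∀ s ∈ l'.map Prod.fst, disj r s)
    (hdB : ∀ r ∈ l.map Prod.snd, ∀ s ∈ l'.map Prod.snd, disj r s) :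
    TP (A ∪ A') (B ∪ B') (l ++ l') := by
  refine ⟨?_, ?_, ?_⟩
  · rw [List.map_append]; exact TL.union h.1 h'.1 hdA
  · rw [List.map_append]; exact TL.union h.2.1 h'.2.1 hdB
  · intro x hx
    rcases List.mem_append.1 hx with hx | hx
    exacts [h.2.2 x hx, h'.2.2 x hx]

lemma TP.congr {A A' B B' : Set (ℝ × ℝ)} {l : List (Rect × Rect)}
    (hA : A = A') (hB : B = B') (h : TP A B l) : TP A' B' l := hA ▸ hB ▸ h

lemma TP.aff {A B : Set (ℝ × ℝ)} {l : List (Rect × Rect)} {c : ℝ} (hc : 0 < c)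
    (u₁ v₁ u₂ v₂ : ℝ) (h : TP A B l) :
    TP (tmap c u₁ v₁ ⁻¹' A) (tmap c u₂ v₂ ⁻¹' B)
      (l.map fun p => (ST.aff c u₁ v₁ p.1, ST.aff c u₂ v₂ p.2)) := by
  refine ⟨?_, ?_, ?_⟩
  · have := TL.aff hc u₁ v₁ h.1
    rw [List.map_map] at this ⊢
    exact this
  · have := TL.aff hc u₂ v₂ h.2.1
    rw [List.map_map] at this ⊢
    exact this
  · intro x hx
    rcases List.mem_map.1 hx with ⟨p, hp, rfl⟩
    have := h.2.2 p hp
    exact ⟨by rw [aff_width, aff_width, this.1], by rw [aff_height, aff_height, this.2]⟩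

lemma glue_x {x1 x2 x3 y1 y2 : ℝ} (h1 : x1 ≤ x2) (h2 : x2 ≤ x3) :
    (⟨x1, x2, y1, y2⟩ : Rect).carrier ∪ (⟨x2, x3, y1, y2⟩ : Rect).carrier
      = (⟨x1, x3, y1, y2⟩ : Rect).carrier := by
  show Set.Icc x1 x2 ×ˢ Set.Icc y1 y2 ∪ Set.Icc x2 x3 ×ˢ Set.Icc y1 y2 = _
  rw [← Set.union_prod, Set.Icc_union_Icc_eq_Icc h1 h2]
  rfl

lemma glue_y {x1 x2 y1 y2 y3 : ℝ} (h1 : y1 ≤ y2) (h2 : y2 ≤ y3) :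
    (⟨x1, x2, y1, y2⟩ : Rect).carrier ∪ (⟨x1, x2, y2, y3⟩ : Rect).carrier
      = (⟨x1, x2, y1, y3⟩ : Rect).carrier := by
  show Set.Icc x1 x2 ×ˢ Set.Icc y1 y2 ∪ Set.Icc x1 x2 ×ˢ Set.Icc y2 y3 = _
  rw [← Set.prod_union, Set.Icc_union_Icc_eq_Icc h1 h2]
  rfl

lemma tmap_box {c : ℝ} (hc : 0 < c) (u v x1 x2 y1 y2 : ℝ) :
    tmap c u v ⁻¹' (⟨x1, x2, y1, y2⟩ : Rect).carrier
      = (⟨c * x1 + u, c * x2 + u, c * y1 + v, c * y2 + v⟩ : Rect).carrier :=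
  (aff_carrier hc u v ⟨x1, x2, y1, y2⟩).symm

end ST

namespace ST
open Set

/-- There is a matched pair of `k`-tilings of the boxes `a × b` and `b × a`. -/
def SPG (a b : ℝ) (k : ℕ) : Prop :=
  ∃ l : List (Rect × Rect),
    TP ((⟨0, a, 0, b⟩ : Rect).carrier) ((⟨0, b, 0, a⟩ : Rect).carrier) l ∧ l.length = k

lemma SPG.sym {a b : ℝ} {k : ℕ} (h : SPG a b k) : SPG b a k := by
  obtain ⟨l, ⟨hA, hB, hw⟩, hlen⟩ := h
  refine ⟨l.map Prod.swap, ⟨?_, ?_, ?_⟩, by simpa using hlen⟩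
  · rw [List.map_map]
    have : (Prod.fst ∘ Prod.swap : Rect × Rect → Rect) = Prod.snd := rfl
    rw [this]; exact hB
  · rw [List.map_map]
    have : (Prod.snd ∘ Prod.swap : Rect × Rect → Rect) = Prod.fst := rfl
    rw [this]; exact hA
  · intro x hx
    rcases List.mem_map.1 hx with ⟨p, hp, rfl⟩
    exact ⟨(hw p hp).1.symm, (hw p hp).2.symm⟩

lemma SPG.scale {a b : ℝ} {k : ℕ} {c : ℝ} (hc : 0 < c) (h : SPG a b k) :
    SPG (c * a) (c * b) k := by
  obtain ⟨l, hTP, hlen⟩ := h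
  refine ⟨l.map fun p => (aff c 0 0 p.1, aff c 0 0 p.2), ?_, by simpa using hlen⟩
  have h2 := TP.aff hc 0 0 0 0 hTP
  refine TP.congr ?_ ?_ h2 <;>
    · rw [tmap_box hc]
      congr 1 <;> ring

lemma SPG.sq {a : ℝ} (ha : 0 < a) : SPG a a 1 := by
  exact ⟨[(⟨0, a, 0, a⟩, ⟨0, a, 0, a⟩)],
    TP.single ⟨show (0:ℝ) < a from ha, show (0:ℝ) < a from ha⟩
      ⟨show (0:ℝ) < a from ha, show (0:ℝ) < a from ha⟩ rfl rfl, rfl⟩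

lemma SPG.peel {a b : ℝ} {k : ℕ} (hb : 0 < b) (hab : b < a) (h : SPG (a - b) b k) :
    SPG a b (k + 1) := by
  obtain ⟨l, hTP, hlen⟩ := h
  have hsq : TP ((⟨a - b, a, 0, b⟩ : Rect).carrier) ((⟨0, b, a - b, a⟩ : Rect).carrier)
      [(⟨a - b, a, 0, b⟩, ⟨0, b, a - b, a⟩)] := by
    refine TP.single ⟨show a - b < a by linarith, hb⟩ ⟨hb, show a - b < a by linarith⟩ ?_ ?_ <;>
      simp [Rect.width, Rect.height] <;> ring
  refine ⟨l ++ [(⟨a - b, a, 0, b⟩, ⟨0, b, a - b, a⟩)], ?_, by simp [hlen]⟩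
  have hu := TP.union hTP hsq ?_ ?_
  · refine TP.congr ?_ ?_ hu
    · exact glue_x (by linarith) (by linarith)
    · exact glue_y (by linarith) (by linarith)
  · intro r hr s hs
    simp only [List.map_cons, List.map_nil, List.mem_singleton] at hs
    subst hs
    refine disj_of_sepx (m := a - b) ?_ ?_
    · exact (TP.congr rfl rfl hTP).1.inner_sub hr |>.trans (carrier_sub_xle (by rfl))
    · exact (inner_sub_carrier _).trans (carrier_sub_xge (by rfl))
  · intro r hr s hs
    simp only [List.map_cons, List.map_nil, List.mem_singleton] at hs
    subst hs
    refine disj_of_sepy (m := a - b) ?_ ?_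
    · exact hTP.2.1.inner_sub hr |>.trans (carrier_sub_yle (by rfl))
    · exact (inner_sub_carrier _).trans (carrier_sub_yge (by rfl))

end ST

namespace ST
open Set

lemma SPG.unit : ∀ n : ℕ, SPG ((n : ℝ) + 1) 1 (n + 1) := by
  intro n
  induction n with
  | zero => simpa using SPG.sq one_pos
  | succ n ih =>
      have hc : (0:ℝ) ≤ (n : ℝ) := Nat.cast_nonneg n
      have ih' : SPG ((n : ℝ) + 1 + 1 - 1) 1 (n + 1) := by
        have e : ((n : ℝ) + 1 + 1 - 1) = (n : ℝ) + 1 := by ring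
        rw [e]; exact ih
      have h := SPG.peel (a := (n : ℝ) + 1 + 1) (b := 1) one_pos (by linarith) ih'
      push_cast
      exact h

lemma SPG.linear (q : ℕ) (hq : 1 ≤ q) : SPG (q : ℝ) ((q : ℝ) + 1) (q + 1) := by
  obtain ⟨n, rfl⟩ : ∃ n, q = n + 1 := ⟨q - 1, by omega⟩
  have hc : (0:ℝ) ≤ (n : ℝ) := Nat.cast_nonneg n
  have h2 : SPG 1 ((n : ℝ) + 1) (n + 1) := (SPG.unit n).sym
  have h2' : SPG ((n : ℝ) + 1 + 1 - ((n : ℝ) + 1)) ((n : ℝ) + 1) (n + 1) := by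
    have e : (n : ℝ) + 1 + 1 - ((n : ℝ) + 1) = 1 := by ring
    rw [e]; exact h2
  have h3 : SPG ((n : ℝ) + 1 + 1) ((n : ℝ) + 1) (n + 1 + 1) :=
    SPG.peel (by positivity) (by linarith) h2'
  have h4 := h3.sym
  push_cast
  exact h4

/-- Two half-squares move: from a pair for `a × (b - a/2)` to a pair for `a × b`. -/
lemma SPG.twosq {a b : ℝ} {k : ℕ} (ha : 0 < a) (hb : 0 < b - a / 2)
    (h : SPG a (b - a / 2) k) : SPG a b (k + 2) := by
  obtain ⟨l, hTP, hlen⟩ := h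
  -- the two squares
  set r1 : Rect := ⟨0, a/2, 0, a/2⟩ with hr1
  set s1 : Rect := ⟨0, a/2, 0, a/2⟩ with hs1
  set r2 : Rect := ⟨a/2, a, 0, a/2⟩ with hr2
  set s2 : Rect := ⟨0, a/2, a/2, a⟩ with hs2
  have hnd : (0:ℝ) < a/2 := by linarith
  have hsq1 : TP r1.carrier s1.carrier [(r1, s1)] :=
    TP.single ⟨show (0:ℝ) < a/2 from hnd, show (0:ℝ) < a/2 from hnd⟩
      ⟨show (0:ℝ) < a/2 from hnd, show (0:ℝ) < a/2 from hnd⟩ rfl rfl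
  have hsq2 : TP r2.carrier s2.carrier [(r2, s2)] := by
    refine TP.single ⟨show a/2 < a by linarith, show (0:ℝ) < a/2 from hnd⟩
      ⟨show (0:ℝ) < a/2 from hnd, show a/2 < a by linarith⟩ ?_ ?_ <;>
      simp [Rect.width, Rect.height, hr2, hs2] <;> ring
  -- bottom (resp. left) slab of two squares
  have hslab : TP ((⟨0, a, 0, a/2⟩ : Rect).carrier) ((⟨0, a/2, 0, a⟩ : Rect).carrier)
      ([(r1, s1)] ++ [(r2, s2)]) := by
    have hu := TP.union hsq1 hsq2 ?_ ?_
    · refine TP.congr ?_ ?_ hu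
      · exact glue_x (by linarith) (by linarith)
      · exact glue_y (by linarith) (by linarith)
    · intro r hr s hs
      simp only [List.map_cons, List.map_nil, List.mem_singleton] at hr hs
      subst hr; subst hs
      exact disj_of_sepx (m := a/2)
        ((inner_sub_carrier _).trans (carrier_sub_xle (by rfl)))
        ((inner_sub_carrier _).trans (carrier_sub_xge (by rfl)))
    · intro r hr s hs
      simp only [List.map_cons, List.map_nil, List.mem_singleton] at hr hs
      subst hr; subst hs
      exact disj_of_sepy (m := a/2)
        ((inner_sub_carrier _).trans (carrier_sub_yle (by rfl)))
        ((inner_sub_carrier _).trans (carrier_sub_yge (by rfl)))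
  -- translated recursive part
  have htr := TP.aff (c := 1) one_pos 0 (a/2) (a/2) 0 hTP
  have htr' : TP ((⟨0, a, a/2, b⟩ : Rect).carrier) ((⟨a/2, b, 0, a⟩ : Rect).carrier)
      (l.map fun p => (aff 1 0 (a/2) p.1, aff 1 (a/2) 0 p.2)) := by
    refine TP.congr ?_ ?_ htr <;>
      · rw [tmap_box one_pos]
        congr 1 <;> ring
  -- combine
  refine ⟨([(r1, s1)] ++ [(r2, s2)]) ++ l.map (fun p => (aff 1 0 (a/2) p.1, aff 1 (a/2) 0 p.2)),
    ?_, by simp [hlen]⟩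
  have hu := TP.union hslab htr' ?_ ?_
  · refine TP.congr ?_ ?_ hu
    · exact glue_y (by linarith) (by linarith)
    · exact glue_x (by linarith) (by linarith)
  · intro r hr s hs
    refine disj_of_sepy (m := a/2) ?_ ?_
    · exact (hslab.1.inner_sub hr).trans (carrier_sub_yle (by rfl))
    · exact (htr'.1.inner_sub hs).trans (carrier_sub_yge (by rfl))
  · intro r hr s hs
    refine disj_of_sepx (m := a/2) ?_ ?_
    · exact (hslab.2.1.inner_sub hr).trans (carrier_sub_xle (by rfl))
    · exact (htr'.2.1.inner_sub hs).trans (carrier_sub_xge (by rfl))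

/-- Step-down (square transfer): from a pair for `(q-1) × q` to a pair for `q × (q+1)`. -/
lemma SPG.stepdown {q : ℝ} {k : ℕ} (hq : 1 < q) (h : SPG (q - 1) q k) :
    SPG q (q + 1) (k + 3) := by
  obtain ⟨l, hTP, hlen⟩ := h
  set Ptop : Rect × Rect := (⟨0, q - 1, q, q + 1⟩, ⟨0, q - 1, q - 1, q⟩) with hPtop
  set Psq : Rect × Rect := (⟨q - 1, q, q, q + 1⟩, ⟨q - 1, q, q - 1, q⟩) with hPsq
  set Pcol : Rect × Rect := (⟨q - 1, q, 0, q⟩, ⟨q, q + 1, 0, q⟩) with hPcol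
  have h01 : (0:ℝ) < q - 1 := by linarith
  have hTtop : TP Ptop.1.carrier Ptop.2.carrier [Ptop] := by
    refine TP.single ⟨show (0:ℝ) < q - 1 from h01, show q < q + 1 by linarith⟩
      ⟨show (0:ℝ) < q - 1 from h01, show q - 1 < q by linarith⟩ ?_ ?_ <;>
      simp [Rect.width, Rect.height, hPtop]
  have hTsq : TP Psq.1.carrier Psq.2.carrier [Psq] := by
    refine TP.single ⟨show q - 1 < q by linarith, show q < q + 1 by linarith⟩
      ⟨show q - 1 < q by linarith, show q - 1 < q by linarith⟩ ?_ ?_ <;>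
      simp [Rect.width, Rect.height, hPsq]
  have hTcol : TP Pcol.1.carrier Pcol.2.carrier [Pcol] := by
    refine TP.single ⟨show q - 1 < q by linarith, show (0:ℝ) < q by linarith⟩
      ⟨show q < q + 1 by linarith, show (0:ℝ) < q by linarith⟩ ?_ ?_ <;>
      simp [Rect.width, Rect.height, hPcol]
  -- step 1: sub ∪ Ptop
  have h1 := TP.union hTP hTtop ?_ ?_
  rotate_left
  · intro r hr s hs
    simp only [hPtop, List.map_cons, List.map_nil, List.mem_singleton] at hs
    subst hs
    exact disj_of_sepy (m := q)
      ((hTP.1.inner_sub hr).trans (carrier_sub_yle (by rfl)))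
      ((inner_sub_carrier _).trans (carrier_sub_yge (by rfl)))
  · intro r hr s hs
    simp only [hPtop, List.map_cons, List.map_nil, List.mem_singleton] at hs
    subst hs
    exact disj_of_sepy (m := q - 1)
      ((hTP.2.1.inner_sub hr).trans (carrier_sub_yle (by rfl)))
      ((inner_sub_carrier _).trans (carrier_sub_yge (by rfl)))
  -- step 2: ∪ Psq
  have h2 := TP.union h1 hTsq ?_ ?_
  rotate_left
  · intro r hr s hs
    simp only [hPsq, List.map_cons, List.map_nil, List.mem_singleton] at hs
    subst hs
    refine disj_of_sepx (m := q - 1) ?_ ?_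
    · refine (h1.1.inner_sub hr).trans ?_
      refine Set.union_subset ?_ ?_ <;> exact carrier_sub_xle (by rfl)
    · exact (inner_sub_carrier _).trans (carrier_sub_xge (by rfl))
  · intro r hr s hs
    simp only [hPsq, List.map_cons, List.map_nil, List.mem_singleton] at hs
    subst hs
    rw [List.map_append] at hr
    rcases List.mem_append.1 hr with hr | hr
    · exact disj_of_sepy (m := q - 1)
        ((hTP.2.1.inner_sub hr).trans (carrier_sub_yle (by rfl)))
        ((inner_sub_carrier _).trans (carrier_sub_yge (by rfl)))
    · simp only [hPtop, List.map_cons, List.map_nil, List.mem_singleton] at hr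
      subst hr
      exact disj_of_sepx (m := q - 1)
        ((inner_sub_carrier _).trans (carrier_sub_xle (by rfl)))
        ((inner_sub_carrier _).trans (carrier_sub_xge (by rfl)))
  -- step 3: ∪ Pcol
  have h3 := TP.union h2 hTcol ?_ ?_
  rotate_left
  · intro r hr s hs
    simp only [hPcol, List.map_cons, List.map_nil, List.mem_singleton] at hs
    subst hs
    rw [List.map_append] at hr
    rcases List.mem_append.1 hr with hr | hr
    · refine disj_of_sepx (m := q - 1) ?_ ((inner_sub_carrier _).trans (carrier_sub_xge (by rfl)))
      refine (h1.1.inner_sub hr).trans ?_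
      refine Set.union_subset ?_ ?_ <;> exact carrier_sub_xle (by rfl)
    · simp only [hPsq, List.map_cons, List.map_nil, List.mem_singleton] at hr
      subst hr
      refine disj_symm (disj_of_sepy (m := q) ?_ ?_)
      · exact (inner_sub_carrier _).trans (carrier_sub_yle (show q ≤ q from le_refl q))
      · exact (inner_sub_carrier _).trans (carrier_sub_yge (show q ≤ q from le_refl q))
  · intro r hr s hs
    simp only [hPcol, List.map_cons, List.map_nil, List.mem_singleton] at hs
    subst hs
    refine disj_of_sepx (m := q) ?_ ((inner_sub_carrier _).trans (carrier_sub_xge (show q ≤ q from le_refl q)))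
    refine (h2.2.1.inner_sub hr).trans ?_
    refine Set.union_subset (Set.union_subset ?_ ?_) ?_
    · exact carrier_sub_xle (show q ≤ q from le_refl q)
    · exact carrier_sub_xle (show q - 1 ≤ q by linarith)
    · exact carrier_sub_xle (show q ≤ q from le_refl q)
  -- final regions
  refine ⟨(l ++ [Ptop] ++ [Psq]) ++ [Pcol], TP.congr ?_ ?_ h3, by simp [hlen]⟩
  · -- A side
    simp only [hPtop, hPsq, hPcol]
    rw [Set.union_assoc
        ((⟨0, q-1, 0, q⟩ : Rect).carrier ∪ (⟨0, q-1, q, q+1⟩ : Rect).carrier)]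
    rw [glue_y (x1 := 0) (x2 := q-1) (y1 := 0) (y2 := q) (y3 := q+1) (by linarith) (by linarith)]
    rw [Set.union_comm ((⟨q-1, q, q, q+1⟩ : Rect).carrier)]
    rw [glue_y (x1 := q-1) (x2 := q) (y1 := 0) (y2 := q) (y3 := q+1) (by linarith) (by linarith)]
    exact glue_x (by linarith) (by linarith)
  · -- B side
    simp only [hPtop, hPsq, hPcol]
    rw [Set.union_assoc ((⟨0, q, 0, q-1⟩ : Rect).carrier)]
    rw [glue_x (x1 := 0) (x2 := q-1) (x3 := q) (y1 := q-1) (y2 := q) (by linarith) (by linarith)]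
    rw [glue_y (x1 := 0) (x2 := q) (y1 := 0) (y2 := q-1) (y3 := q) (by linarith) (by linarith)]
    exact glue_x (by linarith) (by linarith)

end ST

namespace ST
open Set

lemma SPG.q1 {t : ℕ} (ht : 1 ≤ t) {k : ℕ} (h : SPG (t : ℝ) ((t : ℝ) + 1) k) :
    SPG (4 * (t : ℝ) + 1) (4 * (t : ℝ) + 2) (k + 3) := by
  have htR : (1:ℝ) ≤ (t : ℝ) := by exact_mod_cast ht
  -- peel : SPG (2t+1) t (k+1)
  have h1 : SPG ((t : ℝ) + 1) (t : ℝ) k := h.sym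
  have h1' : SPG (2 * (t : ℝ) + 1 - (t : ℝ)) (t : ℝ) k := by
    have e : 2 * (t : ℝ) + 1 - (t : ℝ) = (t : ℝ) + 1 := by ring
    rw [e]; exact h1
  have h2 : SPG (2 * (t : ℝ) + 1) (t : ℝ) (k + 1) :=
    SPG.peel (by linarith) (by linarith) h1'
  -- scale by 2 : SPG (4t+2) (2t) (k+1)
  have h3 : SPG (4 * (t : ℝ) + 2) (2 * (t : ℝ)) (k + 1) := by
    have := h2.scale (c := 2) (by norm_num)
    have e1 : (2:ℝ) * (2 * (t : ℝ) + 1) = 4 * (t : ℝ) + 2 := by ring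
    rw [e1] at this
    exact this
  -- twosq : SPG (4t+2) (4t+1) (k+3)
  have h4 : SPG (4 * (t : ℝ) + 2) (4 * (t : ℝ) + 1) (k + 1 + 2) := by
    refine SPG.twosq (by linarith) (by linarith [htR]) ?_
    have e : 4 * (t : ℝ) + 1 - (4 * (t : ℝ) + 2) / 2 = 2 * (t : ℝ) := by ring
    rw [e]; exact h3
  have h5 := h4.sym
  convert h5 using 2

lemma SPG.q2 {t : ℕ} (ht : 1 ≤ t) {k : ℕ} (h : SPG (t : ℝ) ((t : ℝ) + 1) k) :
    SPG (4 * (t : ℝ) + 2) (4 * (t : ℝ) + 3) (k + 3) := by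
  have htR : (1:ℝ) ≤ (t : ℝ) := by exact_mod_cast ht
  have h1' : SPG (2 * (t : ℝ) + 1 - ((t : ℝ) + 1)) ((t : ℝ) + 1) k := by
    have e : 2 * (t : ℝ) + 1 - ((t : ℝ) + 1) = (t : ℝ) := by ring
    rw [e]; exact h
  have h2 : SPG (2 * (t : ℝ) + 1) ((t : ℝ) + 1) (k + 1) :=
    SPG.peel (by linarith) (by linarith) h1'
  have h3 : SPG (4 * (t : ℝ) + 2) (2 * (t : ℝ) + 2) (k + 1) := by
    have := h2.scale (c := 2) (by norm_num)
    have e1 : (2:ℝ) * (2 * (t : ℝ) + 1) = 4 * (t : ℝ) + 2 := by ring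
    have e2 : (2:ℝ) * ((t : ℝ) + 1) = 2 * (t : ℝ) + 2 := by ring
    rw [e1, e2] at this
    exact this
  have h4 : SPG (4 * (t : ℝ) + 2) (4 * (t : ℝ) + 3) (k + 1 + 2) := by
    refine SPG.twosq (by linarith) (by linarith [htR]) ?_
    have e : 4 * (t : ℝ) + 3 - (4 * (t : ℝ) + 2) / 2 = 2 * (t : ℝ) + 2 := by ring
    rw [e]; exact h3
  convert h4 using 2

lemma TL.toPartition {W H : ℝ} {n : ℕ} {f : Fin n → Rect}
    (h : TL ((⟨0, W, 0, H⟩ : Rect).carrier) (List.ofFn f)) :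
    IsRectPartition W H f := by
  obtain ⟨hnd, hpw, hun⟩ := h
  refine ⟨?_, ?_, ?_⟩
  · intro i
    exact hnd _ (by rw [List.mem_ofFn]; exact ⟨i, rfl⟩)
  · intro i j hij
    rw [List.pairwise_iff_getElem] at hpw
    rcases lt_or_gt_of_ne (fun e => hij (Fin.ext e)) with hlt | hlt
    · have h2 := hpw i.1 j.1 (by simpa using i.2) (by simpa using j.2) hlt
      exact (by simpa [List.getElem_ofFn] using h2 : disj (f i) (f j))
    · have h2 := hpw j.1 i.1 (by simpa using j.2) (by simpa using i.2) hlt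
      have h3 := disj_symm (by simpa [List.getElem_ofFn] using h2)
      exact h3
  · have e : Set.Icc (0:ℝ) W ×ˢ Set.Icc (0:ℝ) H = (⟨0, W, 0, H⟩ : Rect).carrier := rfl
    rw [e, ← hun]
    apply Set.ext; intro z
    simp only [Set.mem_iUnion, exists_prop, List.mem_ofFn]
    constructor
    · rintro ⟨i, hz⟩
      exact ⟨f i, ⟨i, rfl⟩, hz⟩
    · rintro ⟨r, ⟨i, rfl⟩, hz⟩
      exact ⟨i, hz⟩

lemma SPG.toStrict {a b : ℝ} {k : ℕ} (h : SPG a b k) : StrictPairGen a b b a k := by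
  obtain ⟨l, ⟨hA, hB, hwh⟩, hlen⟩ := h
  subst hlen
  have eA : List.ofFn (fun i : Fin l.length => (l.get i).1) = l.map Prod.fst := by
    rw [show l.map Prod.fst = (List.ofFn l.get).map Prod.fst by rw [List.ofFn_get],
      List.map_ofFn]
    rfl
  have eB : List.ofFn (fun i : Fin l.length => (l.get i).2) = l.map Prod.snd := by
    rw [show l.map Prod.snd = (List.ofFn l.get).map Prod.snd by rw [List.ofFn_get],
      List.map_ofFn]
    rfl
  refine ⟨fun i => (l.get i).1, fun i => (l.get i).2, Equiv.refl _,
    TL.toPartition (by rw [eA]; exact hA), TL.toPartition (by rw [eB]; exact hB), ?_⟩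
  intro i
  exact hwh (l.get i) (List.get_mem l i)

end ST

namespace ST
open Set

lemma sqrt_four : Real.sqrt 4 = 2 := by
  rw [show (4:ℝ) = 2^2 by norm_num, Real.sqrt_sq (by norm_num : (0:ℝ) ≤ 2)]

lemma main : ∀ q : ℕ, 1 ≤ q →
    ∃ k : ℕ, SPG (q:ℝ) ((q:ℝ)+1) k ∧ (k : ℝ) ≤ 4 * Real.sqrt q + 1 := by
  intro q
  induction q using Nat.strong_induction_on with
  | _ q IH =>
    intro hq
    by_cases hsmall : q ≤ 16
    · refine ⟨q + 1, SPG.linear q hq, ?_⟩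
      have h1 : Real.sqrt q ≤ 4 := by
        rw [show (4:ℝ) = Real.sqrt 16 by
          rw [show (16:ℝ) = 4^2 by norm_num, Real.sqrt_sq (by norm_num : (0:ℝ) ≤ 4)]]
        exact Real.sqrt_le_sqrt (by exact_mod_cast hsmall)
      have h2 : (q:ℝ) = Real.sqrt q * Real.sqrt q :=
        (Real.mul_self_sqrt (by positivity)).symm
      push_cast
      nlinarith [Real.sqrt_nonneg (q:ℝ)]
    · push_neg at hsmall
      set t := q / 4 with ht
      have hTnn : (0:ℝ) ≤ (t:ℝ) := Nat.cast_nonneg t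
      have h1t : (1:ℝ) ≤ Real.sqrt t := by
        rw [show (1:ℝ) = Real.sqrt 1 by rw [Real.sqrt_one]]
        exact Real.sqrt_le_sqrt (by exact_mod_cast (by omega : 1 ≤ t))
      have hmod : q % 4 = 0 ∨ q % 4 = 1 ∨ q % 4 = 2 ∨ q % 4 = 3 := by omega
      rcases hmod with hr | hr | hr | hr
      · -- q = 4(t-1) + 4
        set u := t - 1 with hu
        have equ : q = 4*u + 4 := by omega
        have e1 : (q:ℝ) = 4*(u:ℝ)+4 := by exact_mod_cast equ
        obtain ⟨k, hk, hb⟩ := IH u (by omega) (by omega)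
        have hS1 := SPG.q2 (t := u) (by omega) hk
        have hS2 : SPG (4*(u:ℝ)+3) ((4*(u:ℝ)+3)+1) (k + 3 + 3) := by
          refine SPG.stepdown (by linarith [Nat.cast_nonneg (α := ℝ) u]) ?_
          rw [show 4*(u:ℝ)+3-1 = 4*(u:ℝ)+2 by ring]
          exact hS1
        have hS3 : SPG (4*(u:ℝ)+4) ((4*(u:ℝ)+4)+1) (k + 3 + 3 + 3) := by
          refine SPG.stepdown (by linarith [Nat.cast_nonneg (α := ℝ) u]) ?_
          rw [show 4*(u:ℝ)+4-1 = 4*(u:ℝ)+3 by ring]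
          rw [show 4*(u:ℝ)+4 = (4*(u:ℝ)+3)+1 by ring]
          exact hS2
        refine ⟨k + 3 + 3 + 3, by rw [e1]; exact hS3, ?_⟩
        have hUnn : (0:ℝ) ≤ (u:ℝ) := Nat.cast_nonneg u
        have hs2 : (2:ℝ) ≤ Real.sqrt u := by
          rw [show (2:ℝ) = Real.sqrt 4 by rw [sqrt_four]]
          exact Real.sqrt_le_sqrt (by exact_mod_cast (by omega : 4 ≤ u))
        have hq1 : Real.sqrt (q:ℝ) = 2 * Real.sqrt ((u:ℝ)+1) := by
          rw [e1, show 4*(u:ℝ)+4 = 4*((u:ℝ)+1) by ring,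
            Real.sqrt_mul (by norm_num : (0:ℝ) ≤ 4), sqrt_four]
        have key : (4*Real.sqrt u + 9) / 8 ≤ Real.sqrt ((u:ℝ)+1) := by
          have hA : ((4*Real.sqrt u + 9)/8)^2 ≤ (u:ℝ)+1 := by
            nlinarith [Real.sq_sqrt hUnn, sq_nonneg (Real.sqrt (u:ℝ) - 2), hs2,
              Real.sqrt_nonneg (u:ℝ)]
          have hB : (4*Real.sqrt u + 9)/8 = Real.sqrt (((4*Real.sqrt u + 9)/8)^2) :=
            (Real.sqrt_sq (by positivity)).symm
          rw [hB]; exact Real.sqrt_le_sqrt hA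
        push_cast
        rw [hq1] at *
        linarith [hb, key]
      · -- q = 4t + 1
        have equ : q = 4*t + 1 := by omega
        have e1 : (q:ℝ) = 4*(t:ℝ)+1 := by exact_mod_cast equ
        obtain ⟨k, hk, hb⟩ := IH t (by omega) (by omega)
        have hS := SPG.q1 (t := t) (by omega) hk
        refine ⟨k + 3, ?_, ?_⟩
        · rw [e1, show (4*(t:ℝ)+1)+1 = 4*(t:ℝ)+2 by ring]
          exact hS
        have hs4 : Real.sqrt (4*(t:ℝ)) = 2 * Real.sqrt t := by
          rw [Real.sqrt_mul (by norm_num : (0:ℝ) ≤ 4), sqrt_four]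
        have hc1 : 2 * Real.sqrt (t:ℝ) ≤ Real.sqrt q := by
          rw [← hs4]
          exact Real.sqrt_le_sqrt (by rw [e1]; linarith)
        push_cast
        linarith [hb, h1t]
      · -- q = 4t + 2
        have equ : q = 4*t + 2 := by omega
        have e1 : (q:ℝ) = 4*(t:ℝ)+2 := by exact_mod_cast equ
        obtain ⟨k, hk, hb⟩ := IH t (by omega) (by omega)
        have hS := SPG.q2 (t := t) (by omega) hk
        refine ⟨k + 3, ?_, ?_⟩
        · rw [e1, show (4*(t:ℝ)+2)+1 = 4*(t:ℝ)+3 by ring]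
          exact hS
        have hs4 : Real.sqrt (4*(t:ℝ)) = 2 * Real.sqrt t := by
          rw [Real.sqrt_mul (by norm_num : (0:ℝ) ≤ 4), sqrt_four]
        have hc1 : 2 * Real.sqrt (t:ℝ) ≤ Real.sqrt q := by
          rw [← hs4]
          exact Real.sqrt_le_sqrt (by rw [e1]; linarith)
        push_cast
        linarith [hb, h1t]
      · -- q = 4t + 3
        have equ : q = 4*t + 3 := by omega
        have e1 : (q:ℝ) = 4*(t:ℝ)+3 := by exact_mod_cast equ
        obtain ⟨k, hk, hb⟩ := IH t (by omega) (by omega)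
        have hS1 := SPG.q2 (t := t) (by omega) hk
        have hS2 : SPG (4*(t:ℝ)+3) ((4*(t:ℝ)+3)+1) (k + 3 + 3) := by
          refine SPG.stepdown (by linarith [Nat.cast_nonneg (α := ℝ) t]) ?_
          rw [show 4*(t:ℝ)+3-1 = 4*(t:ℝ)+2 by ring]
          exact hS1
        refine ⟨k + 3 + 3, by rw [e1]; exact hS2, ?_⟩
        have key : Real.sqrt (t:ℝ) + 3/2 ≤ Real.sqrt (q:ℝ) := by
          rw [e1]
          have hA : (Real.sqrt (t:ℝ) + 3/2)^2 ≤ 4*(t:ℝ)+3 := by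
            nlinarith [Real.sq_sqrt hTnn, sq_nonneg (Real.sqrt (t:ℝ) - 1/2),
              Real.sqrt_nonneg (t:ℝ)]
          have hB : Real.sqrt (t:ℝ) + 3/2 = Real.sqrt ((Real.sqrt (t:ℝ) + 3/2)^2) :=
            (Real.sqrt_sq (by positivity)).symm
          rw [hB]; exact Real.sqrt_le_sqrt hA
        push_cast
        linarith [hb, key]

end ST

/-- For every positive integer `p`, `SIRTP(p, p+1)` has a solution of size at most `4√p + 1`. -/
theorem sirtp_square_transfer_general (p : ℕ) (hp : 0 < p) :
    ∃ k : ℕ, StrictPair (p : ℝ) ((p : ℝ) + 1) k ∧ (k : ℝ) ≤ 4 * Real.sqrt (p : ℝ) + 1 := by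
  obtain ⟨k, hS, hb⟩ := ST.main p hp
  exact ⟨k, hS.toStrict, hb⟩
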